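/- Let f be a continuous, subhomogeneous, order-preserving map on a closed solid cone K, ψ ∈ Int(K*), and Ω_c = {x ∈ K : ψ(x) = c} with c > 0. If there exists x ∈ Ω_c with f(x) ≥_K αx, then the slice spectral radius ρ^c_K(f) := max{λ : ∃x ∈ Ω_c, f(x) = λx} satisfies ρ^c_K(f) ≥ α; moreover ρ^c_K(f) = sup_{x∈Ω_c} m(f(x)/x). Dually, if there exists x ∈ Int(K) ∩ Ω_c with f(x) ≤_K βx, then ρ^c_K(f) ≤ β, and ρ^c_K(f) = inf_{x∈Int(K)∩Ω_c} M(f(x)/x). -/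

import Mathlib

section CWAux
variable {V : Type*} [NormedAddCommGroup V] [NormedSpace ℝ V]

lemma cw_add {K : Set V} (hKconv : Convex ℝ K)
    (hKcone : ∀ c : ℝ, 0 ≤ c → ∀ x ∈ K, c • x ∈ K)
    {x y : V} (hx : x ∈ K) (hy : y ∈ K) : x + y ∈ K := by
  have h := hKconv hx hy (by norm_num : (0:ℝ) ≤ 1/2) (by norm_num : (0:ℝ) ≤ 1/2) (by norm_num)
  have h2 := hKcone 2 (by norm_num) _ h
  have : (2:ℝ) • ((1/2 : ℝ) • x + (1/2 : ℝ) • y) = x + y := by module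
  rwa [this] at h2

lemma cw_zero {K : Set V} (hKcone : ∀ c : ℝ, 0 ≤ c → ∀ x ∈ K, c • x ∈ K)
    {x : V} (hx : x ∈ K) : (0:V) ∈ K := by
  have := hKcone 0 le_rfl x hx
  rwa [zero_smul] at this

lemma cw_psi_nonneg {K : Set V} {ψ : V →ₗ[ℝ] ℝ}
    (hψ : ∀ x ∈ K, x ≠ 0 → 0 < ψ x) {x : V} (hx : x ∈ K) : 0 ≤ ψ x := by
  rcases eq_or_ne x 0 with rfl | h
  · simp
  · exact (hψ x hx h).le

lemma cw_int_add {K : Set V} (hKconv : Convex ℝ K)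
    (hKcone : ∀ c : ℝ, 0 ≤ c → ∀ x ∈ K, c • x ∈ K)
    {x y : V} (hx : x ∈ interior K) (hy : y ∈ K) : x + y ∈ interior K := by
  rw [mem_interior] at hx ⊢
  obtain ⟨t, htK, hto, hxt⟩ := hx
  refine ⟨(· + y) '' t, ?_, ?_, ⟨x, hxt, rfl⟩⟩
  · rintro _ ⟨z, hz, rfl⟩
    exact cw_add hKconv hKcone (htK hz) hy
  · exact (Homeomorph.addRight y).isOpenMap t hto

lemma cw_int_smul {K : Set V} (hKcone : ∀ c : ℝ, 0 ≤ c → ∀ x ∈ K, c • x ∈ K)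
    {t : ℝ} (ht : 0 < t) {x : V} (hx : x ∈ interior K) : t • x ∈ interior K := by
  rw [mem_interior] at hx ⊢
  obtain ⟨s, hsK, hso, hxs⟩ := hx
  refine ⟨(t • ·) '' s, ?_, ?_, ⟨x, hxs, rfl⟩⟩
  · rintro _ ⟨z, hz, rfl⟩
    exact hKcone t ht.le z (hsK hz)
  · exact (Homeomorph.smulOfNeZero t ht.ne').isOpenMap s hso

lemma cw_dom' {K : Set V} (hKcone : ∀ c : ℝ, 0 ≤ c → ∀ x ∈ K, c • x ∈ K)
    {z : V} {r : ℝ} (hr : 0 < r) (hball : Metric.ball z r ⊆ K)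
    {t : ℝ} (ht : 0 < t) {v : V} (hv : ‖v‖ < r * t) : t • z - v ∈ K := by
  have h1 : z - t⁻¹ • v ∈ Metric.ball z r := by
    rw [Metric.mem_ball, dist_eq_norm]
    have h0 : z - t⁻¹ • v - z = -(t⁻¹ • v) := by abel
    rw [h0, norm_neg, norm_smul, Real.norm_eq_abs, abs_inv, abs_of_pos ht]
    rw [inv_mul_lt_iff₀ ht]
    nlinarith
  have h2 := hKcone t ht.le _ (hball h1)
  have : t • (z - t⁻¹ • v) = t • z - v := by
    rw [smul_sub, smul_smul, mul_inv_cancel₀ ht.ne', one_smul]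
  rwa [this] at h2

lemma cw_dom {K : Set V} (hKcone : ∀ c : ℝ, 0 ≤ c → ∀ x ∈ K, c • x ∈ K)
    {z : V} (hz : z ∈ interior K) (v : V) : ∃ t : ℝ, 0 < t ∧ t • z - v ∈ K := by
  obtain ⟨r, hr, hball⟩ := Metric.isOpen_iff.1 isOpen_interior z hz
  have hball' : Metric.ball z r ⊆ K := hball.trans interior_subset
  refine ⟨(‖v‖ + 1) / r, by positivity, cw_dom' hKcone hr hball' (by positivity) ?_⟩
  rw [mul_div_assoc']
  rw [lt_div_iff₀ hr] ; nlinarith [norm_nonneg v, hr]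

end CWAux

section CWAux2
variable {V : Type*} [NormedAddCommGroup V] [NormedSpace ℝ V] [FiniteDimensional ℝ V]

lemma cw_delta {K : Set V} (hKcl : IsClosed K)
    (hKcone : ∀ c : ℝ, 0 ≤ c → ∀ x ∈ K, c • x ∈ K)
    {ψ : V →ₗ[ℝ] ℝ} (hψ : ∀ x ∈ K, x ≠ 0 → 0 < ψ x) :
    ∃ δ : ℝ, 0 < δ ∧ ∀ x ∈ K, δ * ‖x‖ ≤ ψ x := by
  have hψc : Continuous ψ := ψ.continuous_of_finiteDimensional
  by_cases hK : (K ∩ Metric.sphere 0 1).Nonempty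
  · have hcpt : IsCompact (K ∩ Metric.sphere 0 1) :=
      (isCompact_sphere 0 1).of_isClosed_subset
        (hKcl.inter Metric.isClosed_sphere) Set.inter_subset_right
    obtain ⟨z, hz, hmin⟩ := hcpt.exists_isMinOn hK hψc.continuousOn
    have hz1 : ‖z‖ = 1 := by simpa using hz.2
    have hzne : z ≠ 0 := by intro h; rw [h] at hz1; simp at hz1
    refine ⟨ψ z, hψ z hz.1 hzne, fun x hx => ?_⟩
    rcases eq_or_ne x 0 with rfl | hx0
    · simp
    · have hnx : (0:ℝ) < ‖x‖ := norm_pos_iff.2 hx0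
      have hmem : ‖x‖⁻¹ • x ∈ K ∩ Metric.sphere 0 1 := by
        refine ⟨hKcone _ (by positivity) x hx, ?_⟩
        simp [norm_smul, abs_of_pos (inv_pos.2 hnx), inv_mul_cancel₀ hnx.ne']
      have := hmin hmem
      have h2 : ψ z ≤ ‖x‖⁻¹ * ψ x := by simpa using this
      calc ψ z * ‖x‖ ≤ (‖x‖⁻¹ * ψ x) * ‖x‖ := by nlinarith
      _ = ψ x := by field_simp
  · refine ⟨1, one_pos, fun x hx => ?_⟩
    rcases eq_or_ne x 0 with rfl | hx0
    · simp
    · exfalso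
      have hnx : (0:ℝ) < ‖x‖ := norm_pos_iff.2 hx0
      exact hK ⟨‖x‖⁻¹ • x, hKcone _ (by positivity) x hx, by
        simp [norm_smul, abs_of_pos (inv_pos.2 hnx), inv_mul_cancel₀ hnx.ne']⟩

lemma cw_slice_compact {K : Set V} (hKcl : IsClosed K)
    {ψ : V →ₗ[ℝ] ℝ} {c δ : ℝ} (hδ : 0 < δ) (hδK : ∀ x ∈ K, δ * ‖x‖ ≤ ψ x) :
    IsCompact {x | x ∈ K ∧ ψ x = c} := by
  have hψc : Continuous ψ := ψ.continuous_of_finiteDimensional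
  apply Metric.isCompact_of_isClosed_isBounded
  · exact hKcl.inter (isClosed_eq hψc continuous_const)
  · rw [Metric.isBounded_iff_subset_closedBall 0]
    refine ⟨c / δ, fun x hx => ?_⟩
    have := hδK x hx.1
    rw [hx.2] at this
    simp only [Metric.mem_closedBall, dist_zero_right]
    rw [le_div_iff₀ hδ]; linarith

/-- Comparison lemma: a supereigenvalue is dominated by an interior subeigenvalue. -/
lemma cw_cmp {K : Set V} (hKcl : IsClosed K) (hKconv : Convex ℝ K)
    (hKcone : ∀ c : ℝ, 0 ≤ c → ∀ x ∈ K, c • x ∈ K)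
    {ψ : V →ₗ[ℝ] ℝ} (hψ : ∀ x ∈ K, x ≠ 0 → 0 < ψ x) {c : ℝ} (hc : 0 < c)
    {h : V → V} (hmap : ∀ x ∈ K, h x ∈ K)
    (hsub : ∀ x ∈ K, ∀ l : ℝ, 1 ≤ l → l • h x - h (l • x) ∈ K)
    (hord : ∀ x ∈ K, ∀ y ∈ K, y - x ∈ K → h y - h x ∈ K)
    {α β : ℝ} {x z : V} (hx : x ∈ K) (hψx : ψ x = c) (hα : h x - α • x ∈ K)
    (hzi : z ∈ interior K) (hψz : ψ z = c) (hβ : β • z - h z ∈ K) :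
    α ≤ β := by
  have hzK : z ∈ K := interior_subset hzi
  have hβ0 : 0 ≤ β := by
    have h1 := cw_psi_nonneg hψ hβ
    have h2 := cw_psi_nonneg hψ (hmap z hzK)
    simp only [map_sub, map_smul, smul_eq_mul, hψz] at h1
    nlinarith
  -- the set B of upper multipliers
  set B : Set ℝ := {b : ℝ | b • z - x ∈ K} with hB
  have hBcl : IsClosed B := by
    have : Continuous fun b : ℝ => b • z - x := by fun_prop
    exact hKcl.preimage this
  have hBne : B.Nonempty := by
    obtain ⟨t, ht, htm⟩ := cw_dom hKcone hzi x
    exact ⟨t, htm⟩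
  have hlb : ∀ b ∈ B, (1:ℝ) ≤ b := by
    intro b hb
    have := cw_psi_nonneg hψ hb
    simp only [map_sub, map_smul, smul_eq_mul, hψz, hψx] at this
    nlinarith
  have hBbdd : BddBelow B := ⟨1, hlb⟩
  set t := sInf B with htdef
  have htB : t ∈ B := hBcl.csInf_mem hBne hBbdd
  have ht1 : 1 ≤ t := le_csInf hBne hlb
  have ht0 : 0 < t := lt_of_lt_of_le one_pos ht1
  -- chain: t•β•z - α•x ∈ K
  have htzK : t • z ∈ K := hKcone t ht0.le z hzK
  have c1 : h (t • z) - h x ∈ K := hord x hx (t • z) htzK htB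
  have c2 : t • h z - h (t • z) ∈ K := hsub z hzK t ht1
  have c3 : t • (β • z - h z) ∈ K := hKcone t ht0.le _ hβ
  have c4 : (t * β) • z - α • x ∈ K := by
    have := cw_add hKconv hKcone (cw_add hKconv hKcone c3 c2) (cw_add hKconv hKcone c1 hα)
    have heq : t • (β • z - h z) + (t • h z - h (t • z)) + (h (t • z) - h x + (h x - α • x))
        = (t * β) • z - α • x := by module
    rwa [heq] at this
  rcases le_or_gt α 0 with hα0 | hα0
  · linarith
  · have hmem : t * β / α ∈ B := by
      have := hKcone α⁻¹ (by positivity) _ c4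
      have heq : α⁻¹ • ((t * β) • z - α • x) = (t * β / α) • z - x := by
        rw [smul_sub, smul_smul, smul_smul, inv_mul_cancel₀ hα0.ne', one_smul,
          inv_mul_eq_div]
      rwa [heq] at this
    have := csInf_le hBbdd hmem
    rw [← htdef] at this
    -- t ≤ t β / α, t > 0, α > 0 ⇒ α ≤ β
    rw [le_div_iff₀ hα0] at this
    nlinarith

end CWAux2

section CWAux3
variable {V : Type*} [NormedAddCommGroup V] [NormedSpace ℝ V] [FiniteDimensional ℝ V]

set_option maxHeartbeats 2000000 in
/-- Key existence lemma: the perturbed map `x ↦ f x + ε • u` has an eigenvector with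
positive eigenvalue in the interior of `K`, on the slice `ψ = c`. Proved by a
Birkhoff-type contraction argument (no Brouwer needed). -/
lemma cw_perturbed {K : Set V} (hKcl : IsClosed K) (hKconv : Convex ℝ K)
    (hKcone : ∀ c : ℝ, 0 ≤ c → ∀ x ∈ K, c • x ∈ K)
    {f : V → V} (hmap : ∀ x ∈ K, f x ∈ K) (hcont : ContinuousOn f K)
    (hsub : ∀ x ∈ K, ∀ l : ℝ, 1 ≤ l → l • f x - f (l • x) ∈ K)
    (hord : ∀ x ∈ K, ∀ y ∈ K, y - x ∈ K → f y - f x ∈ K)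
    {ψ : V →ₗ[ℝ] ℝ} (hψ : ∀ x ∈ K, x ≠ 0 → 0 < ψ x)
    {c : ℝ} (hc : 0 < c) {u : V} (hu : u ∈ interior K) (hψu : ψ u = c)
    {ε : ℝ} (hε : 0 < ε) :
    ∃ (x : V) (l : ℝ), x ∈ interior K ∧ ψ x = c ∧ 0 < l ∧ f x + ε • u = l • x := by
  classical
  have hψcont : Continuous ψ := ψ.continuous_of_finiteDimensional
  obtain ⟨δ, hδ, hδK⟩ := cw_delta hKcl hKcone hψ
  set Ω : Set V := {x | x ∈ K ∧ ψ x = c} with hΩdef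
  have hΩcpt : IsCompact Ω := cw_slice_compact hKcl hδ hδK
  have hΩK : Ω ⊆ K := fun x hx => hx.1
  have hΩnorm : ∀ x ∈ Ω, ‖x‖ ≤ c / δ := by
    intro x hx
    have := hδK x hx.1
    rw [hx.2] at this
    rw [le_div_iff₀ hδ]; linarith
  obtain ⟨N, hN⟩ := hΩcpt.exists_bound_of_continuousOn (hcont.mono hΩK)
  obtain ⟨r, hr, hball⟩ := Metric.isOpen_iff.1 isOpen_interior u hu
  have hballK : Metric.ball u r ⊆ K := hball.trans interior_subset
  obtain ⟨R, hRdef⟩ : ∃ R : ℝ, R = (max N 0 + c / δ + 1) / r + 1 := ⟨_, rfl⟩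
  have hcδ : 0 ≤ c / δ := by positivity
  have hR1 : 1 ≤ R := by
    have : 0 ≤ (max N 0 + c / δ + 1) / r := by positivity
    rw [hRdef]; linarith
  have hR0 : 0 < R := lt_of_lt_of_le one_pos hR1
  have hrR : max N 0 + c / δ + 1 ≤ r * R := by
    rw [hRdef, mul_add, mul_one, mul_div_cancel₀ _ hr.ne']
    linarith
  have hRf : ∀ y ∈ Ω, R • u - f y ∈ K := by
    intro y hy
    refine cw_dom' hKcone hr hballK hR0 ?_
    have := hN y hy
    have h0 := le_max_left N 0
    linarith
  have hRy : ∀ y ∈ Ω, R • u - y ∈ K := by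
    intro y hy
    refine cw_dom' hKcone hr hballK hR0 ?_
    have := hΩnorm y hy
    have h0 := le_max_right N 0
    linarith
  have hψf_le : ∀ y ∈ Ω, ψ (f y) ≤ R * c := by
    intro y hy
    have := cw_psi_nonneg hψ (hRf y hy)
    simp only [map_sub, map_smul, smul_eq_mul, hψu] at this
    linarith
  set g : V → V := fun x => f x + ε • u with hgdef
  clear_value g
  have hgmem : ∀ x ∈ K, g x ∈ interior K := by
    intro x hx
    have h1 : ε • u ∈ interior K := cw_int_smul hKcone hε hu
    have h2 := cw_int_add hKconv hKcone h1 (hmap x hx)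
    simpa [hgdef, add_comm] using h2
  have hψg_pos : ∀ x ∈ K, 0 < ψ (g x) := by
    intro x hx
    have h1 := cw_psi_nonneg hψ (hmap x hx)
    have h2 : ψ (g x) = ψ (f x) + ε * c := by simp [hgdef, hψu]
    rw [h2]; nlinarith
  have hψg_ub : ∀ x ∈ Ω, ψ (g x) ≤ (R + ε) * c := by
    intro x hx
    have h1 := hψf_le x hx
    have h2 : ψ (g x) = ψ (f x) + ε * c := by simp [hgdef, hψu]
    rw [h2]; nlinarith
  set T : V → V := fun x => (c / ψ (g x)) • g x with hTdef
  clear_value T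
  have hTΩ : ∀ x ∈ Ω, T x ∈ Ω ∧ T x ∈ interior K := by
    intro x hx
    have hgx : g x ∈ interior K := hgmem x hx.1
    have hgp := hψg_pos x hx.1
    have hTi : T x ∈ interior K := by
      rw [hTdef]; exact cw_int_smul hKcone (div_pos hc hgp) hgx
    have hψT : ψ (T x) = c := by
      simp only [hTdef, map_smul, smul_eq_mul]
      field_simp
    exact ⟨⟨interior_subset hTi, hψT⟩, hTi⟩
  have hRε : (0:ℝ) < R + ε := by linarith
  obtain ⟨k, hkdef⟩ : ∃ k : ℝ, k = R / (R + ε) := ⟨_, rfl⟩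
  have hk0 : 0 < k := hkdef ▸ div_pos hR0 hRε
  have hk1 : k < 1 := by rw [hkdef, div_lt_one hRε]; linarith
  have hk1' : 1 - k = ε / (R + ε) := by rw [hkdef]; field_simp; ring
  have hTlow : ∀ x ∈ Ω, T x - (1 - k) • u ∈ K := by
    intro x hx
    have hgp := hψg_pos x hx.1
    have h1 : (c / ψ (g x)) • f x ∈ K := hKcone _ (le_of_lt (div_pos hc hgp)) _ (hmap x hx.1)
    have h2 : (c * ε / ψ (g x) - (1 - k)) • u ∈ K := by
      apply hKcone _ ?_ u (interior_subset hu)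
      rw [hk1', sub_nonneg, div_le_div_iff₀ hRε hgp]
      have := hψg_ub x hx; nlinarith
    have heq : T x - (1 - k) • u
        = (c / ψ (g x)) • f x + (c * ε / ψ (g x) - (1 - k)) • u := by
      simp only [hTdef, hgdef]
      match_scalars <;> field_simp
    rw [heq]; exact cw_add hKconv hKcone h1 h2
  -- the contraction step
  have hstep : ∀ a ∈ Ω, ∀ b ∈ Ω, ∀ lam mu : ℝ, 1 ≤ lam → 1 ≤ mu →
      lam • b - a ∈ K → mu • a - b ∈ K →
      ∃ lam' mu' : ℝ, 1 ≤ lam' ∧ 1 ≤ mu' ∧ lam' • T b - T a ∈ K ∧ mu' • T a - T b ∈ K ∧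
        lam' * mu' - 1 ≤ k * (lam * mu - 1) := by
    have key : ∀ p ∈ Ω, ∀ q ∈ Ω, ∀ l : ℝ, 1 ≤ l → l • q - p ∈ K →
        (1 + k * (l - 1)) • g q - g p ∈ K := by
      intro p hp q hq l hl hpq
      have hfq : l • f q - f p ∈ K := by
        have h1 : f (l • q) - f p ∈ K := hord p hp.1 (l • q) (hKcone l (by linarith) q hq.1) hpq
        have h2 : l • f q - f (l • q) ∈ K := hsub q hq.1 l hl
        have h3 := cw_add hKconv hKcone h2 h1
        rwa [sub_add_sub_cancel] at h3
      have hcoef : (1 + k * (l - 1) - 1) * ε - (l - (1 + k * (l - 1))) * R = 0 := by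
        rw [hkdef]; field_simp; ring
      have hkey : (1 + k * (l - 1)) • g q - g p
          = (l • f q - f p) + (l - (1 + k * (l - 1))) • (R • u - f q)
            + ((1 + k * (l - 1) - 1) * ε - (l - (1 + k * (l - 1))) * R) • u := by
        simp only [hgdef]; module
      rw [hcoef, zero_smul, add_zero] at hkey
      rw [hkey]
      have hnn : 0 ≤ l - (1 + k * (l - 1)) := by nlinarith
      exact cw_add hKconv hKcone hfq (hKcone _ hnn _ (hRf q hq))
    intro a ha b hb lam mu hlam hmu hab hba
    have h1 := key a ha b hb lam hlam hab
    have h2 := key b hb a ha mu hmu hba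
    have hpa : 0 < ψ (g a) := hψg_pos a ha.1
    have hpb : 0 < ψ (g b) := hψg_pos b hb.1
    obtain ⟨lam', hlam'def⟩ : ∃ l' : ℝ, l' = (1 + k * (lam - 1)) * ψ (g b) / ψ (g a) := ⟨_, rfl⟩
    obtain ⟨mu', hmu'def⟩ : ∃ m' : ℝ, m' = (1 + k * (mu - 1)) * ψ (g a) / ψ (g b) := ⟨_, rfl⟩
    have hsc1 : lam' * (c / ψ (g b)) = c / ψ (g a) * (1 + k * (lam - 1)) := by
      rw [hlam'def]; field_simp
    have hsc2 : mu' * (c / ψ (g a)) = c / ψ (g b) * (1 + k * (mu - 1)) := by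
      rw [hmu'def]; field_simp
    have hTa : lam' • T b - T a = (c / ψ (g a)) • ((1 + k * (lam - 1)) • g b - g a) := by
      simp only [hTdef]
      rw [smul_sub, smul_smul, smul_smul, hsc1]
    have hTb : mu' • T a - T b = (c / ψ (g b)) • ((1 + k * (mu - 1)) • g a - g b) := by
      simp only [hTdef]
      rw [smul_sub, smul_smul, smul_smul, hsc2]
    have m1 : lam' • T b - T a ∈ K := by
      rw [hTa]; exact hKcone _ (le_of_lt (div_pos hc hpa)) _ h1
    have m2 : mu' • T a - T b ∈ K := by
      rw [hTb]; exact hKcone _ (le_of_lt (div_pos hc hpb)) _ h2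
    have hTaΩ : T a ∈ Ω := (hTΩ a ha).1
    have hTbΩ : T b ∈ Ω := (hTΩ b hb).1
    have hl1 : 1 ≤ lam' := by
      have h3 := cw_psi_nonneg hψ m1
      simp only [map_sub, map_smul, smul_eq_mul, hTaΩ.2, hTbΩ.2] at h3
      nlinarith
    have hm1 : 1 ≤ mu' := by
      have h3 := cw_psi_nonneg hψ m2
      simp only [map_sub, map_smul, smul_eq_mul, hTaΩ.2, hTbΩ.2] at h3
      nlinarith
    refine ⟨lam', mu', hl1, hm1, m1, m2, ?_⟩
    have hprod : lam' * mu' = (1 + k * (lam - 1)) * (1 + k * (mu - 1)) := by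
      rw [hlam'def, hmu'def]; field_simp
    rw [hprod]
    nlinarith [mul_nonneg (mul_nonneg hk0.le (sub_nonneg.2 hk1.le))
      (mul_nonneg (sub_nonneg.2 hlam) (sub_nonneg.2 hmu))]
  -- the iteration
  set xseq : ℕ → V := fun n => T^[n] u with hxdef
  clear_value xseq
  have hx0 : xseq 0 = u := by rw [hxdef]; rfl
  have hxsucc : ∀ n, xseq (n + 1) = T (xseq n) := by
    intro n; rw [hxdef]; exact Function.iterate_succ_apply' T n u
  have huΩ : u ∈ Ω := ⟨interior_subset hu, hψu⟩
  have hxΩ : ∀ n, xseq n ∈ Ω := by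
    intro n; induction n with
    | zero => rw [hx0]; exact huΩ
    | succ n ih => rw [hxsucc]; exact (hTΩ _ ih).1
  obtain ⟨E, hEdef⟩ : ∃ E : ℝ, E = R * (R + ε) / ε - 1 := ⟨_, rfl⟩
  have hE0 : 0 ≤ E := by
    rw [hEdef, sub_nonneg, le_div_iff₀ hε]; nlinarith
  have hQ : ∀ n, ∃ lam mu : ℝ, 1 ≤ lam ∧ 1 ≤ mu ∧ lam • xseq (n + 1) - xseq n ∈ K ∧
      mu • xseq n - xseq (n + 1) ∈ K ∧ lam * mu ≤ 1 + k ^ n * E := by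
    intro n; induction n with
    | zero =>
      refine ⟨(R + ε) / ε, R, ?_, hR1, ?_, ?_, ?_⟩
      · rw [le_div_iff₀ hε]; nlinarith
      · have h := hTlow u huΩ
        have h2 := hKcone ((R + ε) / ε) (by positivity) _ h
        have hlamk : (R + ε) / ε * (1 - k) = 1 := by rw [hk1']; field_simp
        have heq : ((R + ε) / ε) • (T u - (1 - k) • u) = ((R + ε) / ε) • T u - u := by
          rw [smul_sub, smul_smul, hlamk, one_smul]
        rw [heq] at h2
        rw [hxsucc 0, hx0]
        exact h2
      · rw [hxsucc 0, hx0]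
        exact hRy (T u) (hTΩ u huΩ).1
      · rw [pow_zero, one_mul, hEdef]; rw [div_mul_eq_mul_div]; ring_nf; exact le_refl _
    | succ n ih =>
      obtain ⟨lam, mu, h1, h2, h3, h4, h5⟩ := ih
      obtain ⟨lam', mu', g1, g2, g3, g4, g5⟩ :=
        hstep (xseq n) (hxΩ n) (xseq (n + 1)) (hxΩ (n + 1)) lam mu h1 h2 h3 h4
      refine ⟨lam', mu', g1, g2, ?_, ?_, ?_⟩
      · rw [hxsucc (n + 1)]; rw [← hxsucc n] at g3; exact g3
      · rw [hxsucc (n + 1)]; rw [← hxsucc n] at g4; exact g4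
      · have hkn : (0:ℝ) ≤ k ^ n := pow_nonneg hk0.le n
        have : k ^ (n + 1) = k ^ n * k := pow_succ k n
        nlinarith
  have hdist : ∀ n, dist (xseq n) (xseq (n + 1)) ≤ (2 * c * E / δ) * k ^ n := by
    intro n
    obtain ⟨lam, mu, h1, h2, h3, h4, h5⟩ := hQ n
    have hkn : (0:ℝ) ≤ k ^ n := pow_nonneg hk0.le n
    have hmu1 : mu - 1 ≤ k ^ n * E := by nlinarith
    have hψz : ψ (mu • xseq n - xseq (n + 1)) = (mu - 1) * c := by
      simp only [map_sub, map_smul, smul_eq_mul, (hxΩ n).2, (hxΩ (n + 1)).2]; ring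
    have hnz : ‖mu • xseq n - xseq (n + 1)‖ ≤ (mu - 1) * c / δ := by
      have h6 := hδK _ h4
      rw [hψz] at h6
      rw [le_div_iff₀ hδ]; linarith
    have hxn : ‖xseq n‖ ≤ c / δ := hΩnorm _ (hxΩ n)
    rw [dist_eq_norm]
    have hid : xseq n - xseq (n + 1) = (mu • xseq n - xseq (n + 1)) - (mu - 1) • xseq n := by
      module
    rw [hid]
    have hns : ‖(mu - 1) • xseq n‖ = (mu - 1) * ‖xseq n‖ := by
      rw [norm_smul, Real.norm_eq_abs, abs_of_nonneg (by linarith)]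
    calc ‖(mu • xseq n - xseq (n + 1)) - (mu - 1) • xseq n‖
        ≤ ‖mu • xseq n - xseq (n + 1)‖ + ‖(mu - 1) • xseq n‖ := norm_sub_le _ _
      _ ≤ (mu - 1) * c / δ + (mu - 1) * (c / δ) := by
          rw [hns]
          have : (mu - 1) * ‖xseq n‖ ≤ (mu - 1) * (c / δ) := by nlinarith
          linarith
      _ = 2 * (mu - 1) * (c / δ) := by ring
      _ ≤ 2 * (k ^ n * E) * (c / δ) := by nlinarith [mul_nonneg (sub_nonneg.2 hmu1) hcδ]
      _ = (2 * c * E / δ) * k ^ n := by ring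
  have hcauchy : CauchySeq xseq := cauchySeq_of_le_geometric k (2 * c * E / δ) hk1 hdist
  obtain ⟨p, hp⟩ := cauchySeq_tendsto_of_complete hcauchy
  have hpK : p ∈ K := hKcl.mem_of_tendsto hp (Filter.Eventually.of_forall fun n => (hxΩ n).1)
  have hψp : ψ p = c := by
    have h1 : Filter.Tendsto (fun n => ψ (xseq n)) Filter.atTop (nhds (ψ p)) :=
      (hψcont.tendsto p).comp hp
    have h2 : (fun n => ψ (xseq n)) = fun _ => c := funext fun n => (hxΩ n).2
    rw [h2] at h1
    exact tendsto_nhds_unique h1 tendsto_const_nhds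
  have hpwithin : Filter.Tendsto xseq Filter.atTop (nhdsWithin p K) :=
    tendsto_nhdsWithin_iff.2 ⟨hp, Filter.Eventually.of_forall fun n => (hxΩ n).1⟩
  have hfp : Filter.Tendsto (fun n => f (xseq n)) Filter.atTop (nhds (f p)) :=
    Filter.Tendsto.comp (hcont p hpK) hpwithin
  have hgp : Filter.Tendsto (fun n => g (xseq n)) Filter.atTop (nhds (g p)) := by
    simp only [hgdef]
    exact hfp.add tendsto_const_nhds
  have hgppos : 0 < ψ (g p) := hψg_pos p hpK
  have hTp : Filter.Tendsto (fun n => T (xseq n)) Filter.atTop (nhds (T p)) := by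
    simp only [hTdef]
    exact (tendsto_const_nhds.div ((hψcont.tendsto _).comp hgp) hgppos.ne').smul hgp
  have heqfun : (fun n => T (xseq n)) = fun n => xseq (n + 1) := funext fun n => (hxsucc n).symm
  rw [heqfun] at hTp
  have hshift : Filter.Tendsto (fun n => xseq (n + 1)) Filter.atTop (nhds p) :=
    hp.comp (Filter.tendsto_add_atTop_nat 1)
  have hTpp : T p = p := tendsto_nhds_unique hTp hshift
  refine ⟨p, ψ (g p) / c, ?_, hψp, div_pos hgppos hc, ?_⟩
  · rw [← hTpp]; exact (hTΩ p ⟨hpK, hψp⟩).2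
  · simp only [hTdef] at hTpp
    have h4 : (ψ (g p) / c) • ((c / ψ (g p)) • g p) = g p := by
      rw [smul_smul]
      have h5 : ψ (g p) / c * (c / ψ (g p)) = 1 := by field_simp
      rw [h5, one_smul]
    calc f p + ε • u = g p := by rw [hgdef]
      _ = (ψ (g p) / c) • ((c / ψ (g p)) • g p) := h4.symm
      _ = (ψ (g p) / c) • p := by rw [hTpp]

end CWAux3

/-- The spectral radius of `f` on the slice `{x ∈ K : ψ x = c}`: the largest eigenvalue
attained by an eigenvector on the slice. -/
noncomputable def sliceSpecRad {V : Type*} [AddCommGroup V] [Module ℝ V]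
    (K : Set V) (ψ : V →ₗ[ℝ] ℝ) (c : ℝ) (f : V → V) : ℝ :=
  sSup {l : ℝ | ∃ x, x ∈ K ∧ ψ x = c ∧ f x = l • x}

/-- Collatz–Wielandt characterization of the slice spectral radius of a
continuous, subhomogeneous, order-preserving map. -/
theorem stmt18 {V : Type*} [NormedAddCommGroup V] [NormedSpace ℝ V] [FiniteDimensional ℝ V]
    (K : Set V) (hKcl : IsClosed K) (hKconv : Convex ℝ K)
    (hKcone : ∀ c : ℝ, 0 ≤ c → ∀ x ∈ K, c • x ∈ K)
    (hKsolid : (interior K).Nonempty)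
    (f : V → V) (hmap : ∀ x ∈ K, f x ∈ K) (hcont : ContinuousOn f K)
    (hsub : ∀ x ∈ K, ∀ l : ℝ, 1 ≤ l → l • f x - f (l • x) ∈ K)
    (hord : ∀ x ∈ K, ∀ y ∈ K, y - x ∈ K → f y - f x ∈ K)
    (ψ : V →ₗ[ℝ] ℝ) (hψ : ∀ x ∈ K, x ≠ 0 → 0 < ψ x)
    (c : ℝ) (hc : 0 < c) :
    (∀ α : ℝ, (∃ x, x ∈ K ∧ ψ x = c ∧ f x - α • x ∈ K) → α ≤ sliceSpecRad K ψ c f) ∧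
    sliceSpecRad K ψ c f =
      sSup ((fun x => sSup {a : ℝ | f x - a • x ∈ K}) '' {x | x ∈ K ∧ ψ x = c}) ∧
    (∀ β : ℝ, (∃ x, x ∈ interior K ∧ ψ x = c ∧ β • x - f x ∈ K) →
      sliceSpecRad K ψ c f ≤ β) ∧
    sliceSpecRad K ψ c f =
      sInf ((fun x => sInf {b : ℝ | b • x - f x ∈ K}) ''
        {x | x ∈ interior K ∧ ψ x = c}) := by
  classical
  rcases subsingleton_or_nontrivial V with hV | hV
  · -- degenerate case: the slice is empty
    have hψ0 : ∀ x : V, ψ x ≠ c := by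
      intro x hx
      rw [Subsingleton.elim x 0] at hx
      simp at hx
      exact hc.ne' hx.symm
    have hS : {l : ℝ | ∃ x, x ∈ K ∧ ψ x = c ∧ f x = l • x} = ∅ := by
      rw [Set.eq_empty_iff_forall_notMem]
      rintro l ⟨x, -, hx, -⟩
      exact hψ0 x hx
    have hS1 : {x : V | x ∈ K ∧ ψ x = c} = ∅ := by
      rw [Set.eq_empty_iff_forall_notMem]
      rintro x ⟨-, hx⟩
      exact hψ0 x hx
    have hS2 : {x : V | x ∈ interior K ∧ ψ x = c} = ∅ := by
      rw [Set.eq_empty_iff_forall_notMem]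
      rintro x ⟨-, hx⟩
      exact hψ0 x hx
    have hrad : sliceSpecRad K ψ c f = 0 := by
      rw [sliceSpecRad, hS, Real.sSup_empty]
    refine ⟨?_, ?_, ?_, ?_⟩
    · rintro α ⟨x, -, hx, -⟩; exact absurd hx (hψ0 x)
    · rw [hrad, hS1, Set.image_empty, Real.sSup_empty]
    · rintro β ⟨x, -, hx, -⟩; exact absurd hx (hψ0 x)
    · rw [hrad, hS2, Set.image_empty, Real.sInf_empty]
  -- main case
  obtain ⟨u₀, hu₀⟩ := hKsolid
  have hu₀ne : u₀ ≠ 0 := by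
    rintro rfl
    obtain ⟨r, hr, hball⟩ := Metric.isOpen_iff.1 isOpen_interior 0 hu₀
    obtain ⟨v, hv⟩ := exists_ne (0 : V)
    have hnv : 0 < ‖v‖ := norm_pos_iff.2 hv
    have hwb : ∀ s : ℝ, |s| = r / (2 * ‖v‖) → s • v ∈ K := by
      intro s hs
      refine interior_subset (hball ?_)
      rw [Metric.mem_ball, dist_zero_right, norm_smul, Real.norm_eq_abs, hs]
      rw [div_mul_eq_mul_div, div_lt_iff₀ (by positivity)]
      nlinarith
    have hwK : (r / (2 * ‖v‖)) • v ∈ K := hwb _ (abs_of_pos (by positivity))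
    have hwK' : (-(r / (2 * ‖v‖))) • v ∈ K := hwb _ (by rw [abs_neg]; exact abs_of_pos (by positivity))
    have hwne : (r / (2 * ‖v‖)) • v ≠ 0 := smul_ne_zero (by positivity) hv
    have h1 := hψ _ hwK hwne
    have h2 := hψ _ hwK' (by rwa [neg_smul, neg_ne_zero])
    rw [neg_smul, map_neg] at h2
    linarith
  have hψu₀ : 0 < ψ u₀ := hψ u₀ (interior_subset hu₀) hu₀ne
  have hu : (c / ψ u₀) • u₀ ∈ interior K := cw_int_smul hKcone (div_pos hc hψu₀) hu₀
  set u : V := (c / ψ u₀) • u₀ with hudef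
  have hψu : ψ u = c := by
    rw [hudef, map_smul, smul_eq_mul]; field_simp
  have huK : u ∈ K := interior_subset hu
  clear_value u
  have h0K : (0:V) ∈ K := cw_zero hKcone huK
  obtain ⟨δ, hδ, hδK⟩ := cw_delta hKcl hKcone hψ
  have hΩcpt : IsCompact {x | x ∈ K ∧ ψ x = c} := cw_slice_compact hKcl hδ hδK
  have hψfcont : ContinuousOn (fun y => ψ (f y)) K :=
    ψ.continuous_of_finiteDimensional.comp_continuousOn hcont
  obtain ⟨Cψ, hCψ⟩ := hΩcpt.exists_bound_of_continuousOn
    (hψfcont.mono (fun x hx => hx.1))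
  have hψf_le : ∀ y, y ∈ K → ψ y = c → ψ (f y) ≤ Cψ := by
    intro y h1 h2
    have := hCψ y ⟨h1, h2⟩
    rw [Real.norm_eq_abs] at this
    exact (abs_le.1 this).2
  -- the family of perturbed eigenvectors
  have hex : ∀ n : ℕ, ∃ (x : V) (l : ℝ), x ∈ interior K ∧ ψ x = c ∧ 0 < l ∧
      f x + (1 / ((n:ℝ) + 1)) • u = l • x := by
    intro n
    exact cw_perturbed hKcl hKconv hKcone hmap hcont hsub hord hψ hc hu hψu (by positivity)
  choose X L hX1 hX2 hX3 hX4 using hex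
  have hXK : ∀ n, X n ∈ K := fun n => interior_subset (hX1 n)
  have hXΩ : ∀ n, X n ∈ {x | x ∈ K ∧ ψ x = c} := fun n => ⟨hXK n, hX2 n⟩
  have hεK : ∀ n : ℕ, (1 / ((n:ℝ) + 1)) • u ∈ K := fun n => hKcone _ (by positivity) u huK
  have hLval : ∀ n, L n * c = ψ (f (X n)) + (1 / ((n:ℝ) + 1)) * c := by
    intro n
    have := congrArg ψ (hX4 n)
    simp only [map_add, map_smul, smul_eq_mul, hψu, hX2 n] at this
    linarith
  have hLub : ∀ n, L n ≤ (Cψ + c) / c := by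
    intro n
    rw [le_div_iff₀ hc]
    have h1 := hLval n
    have h2 := hψf_le (X n) (hXK n) (hX2 n)
    have h3 : (1 / ((n:ℝ) + 1)) ≤ 1 := by
      rw [div_le_one (by positivity)]; norm_num
    nlinarith
  have hLlb : ∀ n, 0 ≤ L n := fun n => (hX3 n).le
  -- a subsequence converging to an eigenvector of f
  obtain ⟨p, hpΩ, φ1, hφ1, hXlim⟩ := hΩcpt.tendsto_subseq hXΩ
  obtain ⟨l, hlI, φ2, hφ2, hLlim⟩ :=
    (isCompact_Icc (a := (0:ℝ)) (b := (Cψ + c)/c)).tendsto_subseq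
      (x := fun n => L (φ1 n)) (fun n => ⟨hLlb _, hLub _⟩)
  have hXlim2 : Filter.Tendsto (fun n => X (φ1 (φ2 n))) Filter.atTop (nhds p) :=
    hXlim.comp hφ2.tendsto_atTop
  have hLlim2 : Filter.Tendsto (fun n => L (φ1 (φ2 n))) Filter.atTop (nhds l) := hLlim
  have hεlim : Filter.Tendsto (fun n => (1:ℝ) / (↑(φ1 (φ2 n)) + 1)) Filter.atTop (nhds 0) :=
    tendsto_one_div_add_atTop_nhds_zero_nat.comp (hφ1.comp hφ2).tendsto_atTop
  have hfplim : Filter.Tendsto (fun n => f (X (φ1 (φ2 n)))) Filter.atTop (nhds (f p)) := by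
    refine Filter.Tendsto.comp (hcont p hpΩ.1) ?_
    exact tendsto_nhdsWithin_iff.2 ⟨hXlim2, Filter.Eventually.of_forall fun n => hXK _⟩
  have hfp : f p = l • p := by
    have hrhs : Filter.Tendsto
        (fun n => L (φ1 (φ2 n)) • X (φ1 (φ2 n)) - (1 / ((φ1 (φ2 n) : ℝ) + 1)) • u)
        Filter.atTop (nhds (l • p - (0:ℝ) • u)) :=
      (hLlim2.smul hXlim2).sub (hεlim.smul tendsto_const_nhds)
    rw [zero_smul, sub_zero] at hrhs
    have heq : (fun n => f (X (φ1 (φ2 n)))) =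
        fun n => L (φ1 (φ2 n)) • X (φ1 (φ2 n)) - (1 / ((φ1 (φ2 n) : ℝ) + 1)) • u := by
      funext n
      rw [← hX4 (φ1 (φ2 n))]; abel
    rw [heq] at hfplim
    exact tendsto_nhds_unique hfplim hrhs
  -- basic facts about the eigenvalue set S
  have hlS : l ∈ {l : ℝ | ∃ x, x ∈ K ∧ ψ x = c ∧ f x = l • x} := ⟨p, hpΩ.1, hpΩ.2, hfp⟩
  have hSne : {l : ℝ | ∃ x, x ∈ K ∧ ψ x = c ∧ f x = l • x}.Nonempty := ⟨l, hlS⟩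
  have hSbdd : BddAbove {l : ℝ | ∃ x, x ∈ K ∧ ψ x = c ∧ f x = l • x} := by
    refine ⟨Cψ / c, ?_⟩
    rintro s ⟨x, hxK, hxψ, hxe⟩
    have h1 := hψf_le x hxK hxψ
    rw [hxe, map_smul, smul_eq_mul, hxψ] at h1
    rw [le_div_iff₀ hc]; exact h1
  -- properties of the perturbed maps needed for comparison
  have hcmp : ∀ (n : ℕ) (α : ℝ) (x₀ : V), x₀ ∈ K → ψ x₀ = c → f x₀ - α • x₀ ∈ K →
      α ≤ L n := by
    intro n α x₀ h1 h2 h3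
    set fε : V → V := fun x => f x + (1 / ((n:ℝ) + 1)) • u with hfεdef
    have hmapε : ∀ x ∈ K, fε x ∈ K := fun x hx =>
      cw_add hKconv hKcone (hmap x hx) (hεK n)
    have hsubε : ∀ x ∈ K, ∀ t : ℝ, 1 ≤ t → t • fε x - fε (t • x) ∈ K := by
      intro x hx t ht
      have hkey : t • fε x - fε (t • x)
          = (t • f x - f (t • x)) + (t - 1) • ((1 / ((n:ℝ) + 1)) • u) := by
        simp only [hfεdef]; module
      rw [hkey]
      exact cw_add hKconv hKcone (hsub x hx t ht) (hKcone _ (by linarith) _ (hεK n))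
    have hordε : ∀ x ∈ K, ∀ y ∈ K, y - x ∈ K → fε y - fε x ∈ K := by
      intro x hx y hy hxy
      have hkey : fε y - fε x = f y - f x := by simp only [hfεdef]; abel
      rw [hkey]
      exact hord x hx y hy hxy
    have hsupε : fε x₀ - α • x₀ ∈ K := by
      have hkey : fε x₀ - α • x₀ = (f x₀ - α • x₀) + (1 / ((n:ℝ) + 1)) • u := by
        simp only [hfεdef]; abel
      rw [hkey]
      exact cw_add hKconv hKcone h3 (hεK n)
    have hsubeig : L n • X n - fε (X n) ∈ K := by
      have hkey : L n • X n - fε (X n) = 0 := by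
        simp only [hfεdef]; rw [← hX4 n]; abel
      rw [hkey]; exact h0K
    exact cw_cmp hKcl hKconv hKcone hψ hc hmapε hsubε hordε h1 h2 hsupε
      (hX1 n) (hX2 n) hsubeig
  have hαle : ∀ α : ℝ, (∃ x, x ∈ K ∧ ψ x = c ∧ f x - α • x ∈ K) → α ≤ l := by
    rintro α ⟨x₀, h1, h2, h3⟩
    exact ge_of_tendsto' hLlim2 (fun n => hcmp (φ1 (φ2 n)) α x₀ h1 h2 h3)
  have hl_le : l ≤ sliceSpecRad K ψ c f := le_csSup hSbdd hlS
  -- conjunct 1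
  have hconj1 : ∀ α : ℝ, (∃ x, x ∈ K ∧ ψ x = c ∧ f x - α • x ∈ K) →
      α ≤ sliceSpecRad K ψ c f := fun α hα => (hαle α hα).trans hl_le
  -- conjunct 3
  have hconj3 : ∀ β : ℝ, (∃ x, x ∈ interior K ∧ ψ x = c ∧ β • x - f x ∈ K) →
      sliceSpecRad K ψ c f ≤ β := by
    rintro β ⟨z, hz1, hz2, hz3⟩
    refine csSup_le hSne ?_
    rintro s ⟨x, hxK, hxψ, hxe⟩
    have hsup : f x - s • x ∈ K := by rw [hxe, sub_self]; exact h0K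
    exact cw_cmp hKcl hKconv hKcone hψ hc hmap hsub hord hxK hxψ hsup hz1 hz2 hz3
  refine ⟨hconj1, ?_, hconj3, ?_⟩
  · -- conjunct 2
    have hAne : ∀ x ∈ K, (0:ℝ) ∈ {a : ℝ | f x - a • x ∈ K} := by
      intro x hx
      simp only [Set.mem_setOf_eq, zero_smul, sub_zero]
      exact hmap x hx
    have hAbdd : ∀ x, x ∈ K → ψ x = c → BddAbove {a : ℝ | f x - a • x ∈ K} := by
      intro x h1 h2
      refine ⟨Cψ / c, ?_⟩
      intro a ha
      have h3 := cw_psi_nonneg hψ ha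
      simp only [map_sub, map_smul, smul_eq_mul, h2] at h3
      have h4 := hψf_le x h1 h2
      rw [le_div_iff₀ hc]; nlinarith
    apply le_antisymm
    · refine csSup_le hSne ?_
      rintro s ⟨x, hxK, hxψ, hxe⟩
      have hmem : s ∈ {a : ℝ | f x - a • x ∈ K} := by
        simp only [Set.mem_setOf_eq, hxe, sub_self]; exact h0K
      refine (le_csSup (hAbdd x hxK hxψ) hmem).trans ?_
      refine le_csSup ?_ ⟨x, ⟨hxK, hxψ⟩, rfl⟩
      refine ⟨Cψ / c, ?_⟩
      rintro v ⟨y, hy, rfl⟩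
      exact csSup_le ⟨0, hAne y hy.1⟩ (fun a ha => by
        have h3 := cw_psi_nonneg hψ ha
        simp only [map_sub, map_smul, smul_eq_mul, hy.2] at h3
        have h4 := hψf_le y hy.1 hy.2
        rw [le_div_iff₀ hc]; nlinarith)
    · refine csSup_le ⟨_, ⟨u, ⟨huK, hψu⟩, rfl⟩⟩ ?_
      rintro v ⟨x, hx, rfl⟩
      have hclosed : IsClosed {a : ℝ | f x - a • x ∈ K} := by
        have hcont2 : Continuous fun a : ℝ => f x - a • x := by fun_prop
        exact hKcl.preimage hcont2
      have hmx : sSup {a : ℝ | f x - a • x ∈ K} ∈ {a : ℝ | f x - a • x ∈ K} :=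
        hclosed.csSup_mem ⟨0, hAne x hx.1⟩ (hAbdd x hx.1 hx.2)
      exact hconj1 _ ⟨x, hx.1, hx.2, hmx⟩
  · -- conjunct 4
    have hBne : ∀ x, x ∈ interior K → {b : ℝ | b • x - f x ∈ K}.Nonempty := by
      intro x hx
      obtain ⟨t, ht, htm⟩ := cw_dom hKcone hx (f x)
      exact ⟨t, htm⟩
    have hBlb : ∀ x, x ∈ K → ψ x = c → ∀ b ∈ {b : ℝ | b • x - f x ∈ K}, (0:ℝ) ≤ b := by
      intro x h1 h2 b hb
      have h3 := cw_psi_nonneg hψ hb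
      have h4 := cw_psi_nonneg hψ (hmap x h1)
      simp only [map_sub, map_smul, smul_eq_mul, h2] at h3
      nlinarith
    have hM2bdd : BddBelow ((fun x => sInf {b : ℝ | b • x - f x ∈ K}) ''
        {x | x ∈ interior K ∧ ψ x = c}) := by
      refine ⟨0, ?_⟩
      rintro v ⟨x, hx, rfl⟩
      exact le_csInf (hBne x hx.1) (hBlb x (interior_subset hx.1) hx.2)
    have hM2ne : ((fun x => sInf {b : ℝ | b • x - f x ∈ K}) ''
        {x | x ∈ interior K ∧ ψ x = c}).Nonempty := ⟨_, ⟨u, ⟨hu, hψu⟩, rfl⟩⟩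
    apply le_antisymm
    · refine le_csInf hM2ne ?_
      rintro v ⟨x, hx, rfl⟩
      have hclosed : IsClosed {b : ℝ | b • x - f x ∈ K} := by
        have hcont2 : Continuous fun b : ℝ => b • x - f x := by fun_prop
        exact hKcl.preimage hcont2
      have hbx : sInf {b : ℝ | b • x - f x ∈ K} ∈ {b : ℝ | b • x - f x ∈ K} :=
        hclosed.csInf_mem (hBne x hx.1) ⟨0, hBlb x (interior_subset hx.1) hx.2⟩
      exact hconj3 _ ⟨x, hx.1, hx.2, hbx⟩
    · refine le_trans ?_ hl_le
      refine ge_of_tendsto' hLlim2 ?_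
      intro n
      set m := φ1 (φ2 n) with hmdef
      have hmem : L m ∈ {b : ℝ | b • X m - f (X m) ∈ K} := by
        have hkey : L m • X m - f (X m) = (1 / ((m:ℝ) + 1)) • u := by
          rw [← hX4 m]; abel
        simp only [Set.mem_setOf_eq, hkey]
        exact hεK m
      have h5 : sInf {b : ℝ | b • X m - f (X m) ∈ K} ≤ L m :=
        csInf_le ⟨0, hBlb (X m) (hXK m) (hX2 m)⟩ hmem
      refine le_trans (csInf_le hM2bdd ?_) h5
      exact ⟨X m, ⟨hX1 m, hX2 m⟩, rfl⟩
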